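/- For every integer k ≥ 3, the cost function (x,y) ↦ c₁(x,y) is not continuous on ℝ² × ℝ². -/

import Mathlib

open MeasureTheory intervalIntegral

noncomputable section

/-- The set of achievable costs for the planar control system
`ẋ₁ = u₁`, `ẋ₂ = x₁² + u₂ x₁^k` with Lagrangian `½(u₁² + u₂²)`, over essentially
bounded measurable controls and absolutely continuous trajectories (encoded by the
integral formulation of the ODE) joining `a` to `b` in time `T`. -/
def planarCostSet (k : ℕ) (T : ℝ) (a b : ℝ × ℝ) : Set ℝ :=
  {r : ℝ | ∃ u₁ u₂ x₁ x₂ : ℝ → ℝ,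
    Measurable u₁ ∧ Measurable u₂ ∧
    (∃ C : ℝ, ∀ᵐ t ∂(volume : Measure ℝ), t ∈ Set.Icc 0 T → |u₁ t| ≤ C ∧ |u₂ t| ≤ C) ∧
    ContinuousOn x₁ (Set.Icc 0 T) ∧ ContinuousOn x₂ (Set.Icc 0 T) ∧
    x₁ 0 = a.1 ∧ x₂ 0 = a.2 ∧ x₁ T = b.1 ∧ x₂ T = b.2 ∧
    (∀ t ∈ Set.Icc (0:ℝ) T, x₁ t = x₁ 0 + ∫ s in (0:ℝ)..t, u₁ s) ∧
    (∀ t ∈ Set.Icc (0:ℝ) T, x₂ t = x₂ 0 + ∫ s in (0:ℝ)..t, (x₁ s ^ 2 + u₂ s * x₁ s ^ k)) ∧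
    r = (1 / 2) * ∫ t in (0:ℝ)..T, (u₁ t ^ 2 + u₂ t ^ 2)}

/-- The optimal control cost `c_T(a,b)` for the planar system of Section 2. -/
def planarCost (k : ℕ) (T : ℝ) (a b : ℝ × ℝ) : ℝ :=
  sInf (planarCostSet k T a b)

lemma amgm_sq_le {X a b : ℝ} (hX : 0 ≤ X) (ha : 0 ≤ a) (hb : 0 ≤ b)
    (h : ∀ l : ℝ, 0 < l → X ≤ (l * a + b / l) / 2) : X ^ 2 ≤ a * b := by
  rcases eq_or_lt_of_le hX with hX0 | hX0
  · rw [← hX0]; simp; positivity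
  have ha' : 0 < a := by
    rcases eq_or_lt_of_le ha with ha0 | ha0
    · exfalso
      have h1 := h (b / X + 1) (by positivity)
      rw [← ha0] at h1
      have h2 : b / (b / X + 1) ≤ X := by
        rw [div_le_iff₀ (by positivity)]
        have : X * (b / X) = b := by field_simp
        nlinarith
      nlinarith
    · exact ha0
  rcases eq_or_lt_of_le hb with hb0 | hb0
  · exfalso
    have h1 := h (X / a) (by positivity)
    rw [← hb0] at h1
    have : X / a * a = X := div_mul_cancel₀ X ha'.ne'
    simp [this] at h1
    nlinarith
  have hl : 0 < Real.sqrt b / Real.sqrt a := by positivity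
  have h1 := h _ hl
  have e1 : Real.sqrt b / Real.sqrt a * a = Real.sqrt b * Real.sqrt a := by
    field_simp; rw [Real.sq_sqrt ha]
  have e2 : b / (Real.sqrt b / Real.sqrt a) = Real.sqrt b * Real.sqrt a := by
    rw [div_div_eq_mul_div, mul_comm, mul_div_assoc, Real.div_sqrt, mul_comm]
  rw [e1, e2] at h1
  have h3 : X ≤ Real.sqrt b * Real.sqrt a := by linarith
  calc X ^ 2 ≤ (Real.sqrt b * Real.sqrt a) ^ 2 := by
        apply pow_le_pow_left₀ hX h3
      _ = a * b := by rw [mul_pow, Real.sq_sqrt hb, Real.sq_sqrt ha]; ring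

set_option maxHeartbeats 1000000 in
lemma planarCost_lower_bound (k : ℕ) (hk : 3 ≤ k) (ε : ℝ) (hε : 0 < ε) :
    ∀ r ∈ planarCostSet k 1 (0,0) (0,-ε), (1:ℝ)/4 ≤ r := by
  rintro r ⟨u₁, u₂, x₁, x₂, hu₁m, hu₂m, ⟨C₀, hC₀⟩, hx₁c, hx₂c, hx₁0, hx₂0, hx₁1, hx₂1,
    hx₁eq, hx₂eq, hr⟩
  simp only at hx₁0 hx₂0 hx₁1 hx₂1
  -- replace the bound by a nonnegative one
  set C := |C₀| with hCdef
  have hC : ∀ᵐ t ∂(volume : Measure ℝ), t ∈ Set.Icc 0 1 → |u₁ t| ≤ C ∧ |u₂ t| ≤ C := by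
    filter_upwards [hC₀] with t ht hmem
    exact ⟨(ht hmem).1.trans (le_abs_self _), (ht hmem).2.trans (le_abs_self _)⟩
  have hC0 : (0:ℝ) ≤ C := abs_nonneg _
  -- a.e. bound on the restricted measure
  have hCae : ∀ᵐ t ∂(volume.restrict (Set.Ioc (0:ℝ) 1)), |u₁ t| ≤ C ∧ |u₂ t| ≤ C := by
    filter_upwards [ae_restrict_of_ae hC, ae_restrict_mem measurableSet_Ioc] with t h1 h2
    exact h1 (Set.Ioc_subset_Icc_self h2)
  have hconst : ∀ c : ℝ, IntegrableOn (fun _ : ℝ => c) (Set.Ioc (0:ℝ) 1) := by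
    intro c
    exact integrableOn_const (by simp) (by simp)
  -- integrability of the controls and their squares
  have hu₁i : IntegrableOn u₁ (Set.Ioc (0:ℝ) 1) := by
    apply Integrable.mono' (hconst C) hu₁m.aestronglyMeasurable
    filter_upwards [hCae] with t h using by simpa [Real.norm_eq_abs] using h.1
  have hu₂i : IntegrableOn u₂ (Set.Ioc (0:ℝ) 1) := by
    apply Integrable.mono' (hconst C) hu₂m.aestronglyMeasurable
    filter_upwards [hCae] with t h using by simpa [Real.norm_eq_abs] using h.2
  have hu₁sq : IntegrableOn (fun t => u₁ t ^ 2) (Set.Ioc (0:ℝ) 1) := by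
    apply Integrable.mono' (hconst (C^2)) (hu₁m.pow_const 2).aestronglyMeasurable
    filter_upwards [hCae] with t h
    have := h.1
    have h2 : |u₁ t|^2 ≤ C^2 := by nlinarith [abs_nonneg (u₁ t)]
    simpa [Real.norm_eq_abs, abs_pow, sq_abs] using (by rwa [sq_abs] at h2 : u₁ t ^2 ≤ C^2)
  have hu₂sq : IntegrableOn (fun t => u₂ t ^ 2) (Set.Ioc (0:ℝ) 1) := by
    apply Integrable.mono' (hconst (C^2)) (hu₂m.pow_const 2).aestronglyMeasurable
    filter_upwards [hCae] with t h
    have := h.2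
    have h2 : |u₂ t|^2 ≤ C^2 := by nlinarith [abs_nonneg (u₂ t)]
    simpa [Real.norm_eq_abs, abs_pow, sq_abs] using (by rwa [sq_abs] at h2 : u₂ t ^2 ≤ C^2)
  -- interval integrability on subintervals of [0,1]
  have hII : ∀ (f : ℝ → ℝ), IntegrableOn f (Set.Ioc (0:ℝ) 1) →
      ∀ α β : ℝ, 0 ≤ α → α ≤ β → β ≤ 1 → IntervalIntegrable f volume α β := by
    intro f hf α β h0 hab h1
    rw [intervalIntegrable_iff_integrableOn_Ioc_of_le hab]
    exact hf.mono_set (Set.Ioc_subset_Ioc h0 h1)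
  -- the maximum of |x₁| on [0,1]
  obtain ⟨t₀, ht₀, hmax⟩ := isCompact_Icc.exists_isMaxOn (Set.nonempty_Icc.2 (by norm_num))
    (hx₁c.abs)
  set M := |x₁ t₀| with hMdef
  have hM : ∀ s ∈ Set.Icc (0:ℝ) 1, |x₁ s| ≤ M := fun s hs => hmax hs
  have hM0 : 0 ≤ M := abs_nonneg _
  -- measurability of x₁ on the restricted measure
  have hx₁ae : AEMeasurable x₁ (volume.restrict (Set.Ioc (0:ℝ) 1)) :=
    (hx₁c.aemeasurable measurableSet_Icc).mono_measure
      (Measure.restrict_mono Set.Ioc_subset_Icc_self le_rfl)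
  -- integrability of x₁², u₂·x₁^k on subintervals
  have hx₁sqII : ∀ α β : ℝ, 0 ≤ α → α ≤ β → β ≤ 1 →
      IntervalIntegrable (fun t => x₁ t ^ 2) volume α β := by
    intro α β h0 hab h1
    apply ContinuousOn.intervalIntegrable
    apply (hx₁c.mono ?_).pow
    rw [Set.uIcc_of_le hab]
    exact Set.Icc_subset_Icc h0 h1
  have hBi : IntegrableOn (fun t => u₂ t * x₁ t ^ k) (Set.Ioc (0:ℝ) 1) := by
    apply Integrable.mono' (hconst (C * M^k))
      ((hu₂m.aemeasurable.mono_measure (Measure.restrict_mono Set.Ioc_subset_Icc_self le_rfl)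
        |>.mul (hx₁ae.pow_const k)).aestronglyMeasurable)
    filter_upwards [hCae, ae_restrict_mem measurableSet_Ioc] with t h hmem
    have hx : |x₁ t| ≤ M := hM t (Set.Ioc_subset_Icc_self hmem)
    have : |u₂ t * x₁ t ^ k| = |u₂ t| * |x₁ t|^k := by rw [abs_mul, abs_pow]
    rw [Real.norm_eq_abs]; simp only [Pi.mul_apply]; rw [this]
    exact mul_le_mul h.2 (pow_le_pow_left₀ (abs_nonneg _) hx k)
      (pow_nonneg (abs_nonneg _) k) hC0
  -- the basic integral quantities
  set P := ∫ t in (0:ℝ)..1, u₁ t ^ 2 with hPdef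
  set Q := ∫ t in (0:ℝ)..1, u₂ t ^ 2 with hQdef
  set A := ∫ t in (0:ℝ)..1, x₁ t ^ 2 with hAdef
  set B := ∫ t in (0:ℝ)..1, u₂ t * x₁ t ^ k with hBdef
  have hP0 : 0 ≤ P := integral_nonneg (by norm_num) (fun t _ => sq_nonneg _)
  have hQ0 : 0 ≤ Q := integral_nonneg (by norm_num) (fun t _ => sq_nonneg _)
  have hA0 : 0 ≤ A := integral_nonneg (by norm_num) (fun t _ => sq_nonneg _)
  -- subinterval integrals of nonnegative functions are at most the whole integral
  have hsub : ∀ (f : ℝ → ℝ), (∀ α β : ℝ, 0 ≤ α → α ≤ β → β ≤ 1 →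
      IntervalIntegrable f volume α β) → (∀ t, 0 ≤ f t) →
      ∀ α β : ℝ, 0 ≤ α → α ≤ β → β ≤ 1 →
      (∫ t in α..β, f t) ≤ ∫ t in (0:ℝ)..1, f t := by
    intro f hfI hf0 α β h0 hab h1
    have e1 := integral_add_adjacent_intervals (hfI 0 α (le_refl _) h0 (by linarith))
      (hfI α β h0 hab h1)
    have e2 := integral_add_adjacent_intervals (hfI 0 β (le_refl _) (by linarith) h1)
      (hfI β 1 (by linarith) h1 (le_refl _))
    have n1 : 0 ≤ ∫ t in (0:ℝ)..α, f t := integral_nonneg h0 (fun t _ => hf0 t)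
    have n2 : 0 ≤ ∫ t in β..(1:ℝ), f t := integral_nonneg h1 (fun t _ => hf0 t)
    linarith
  -- increment bound: |∫ u₁|² ≤ P (β-α)
  have habs_incr : ∀ α β : ℝ, 0 ≤ α → α ≤ β → β ≤ 1 →
      |∫ t in α..β, u₁ t| ^ 2 ≤ P * (β - α) := by
    intro α β h0 hab h1
    apply amgm_sq_le (abs_nonneg _) hP0 (by linarith)
    intro l hl
    have pointwise : ∀ x : ℝ, |u₁ x| ≤ (l * u₁ x ^ 2 + (1/l) * 1) / 2 := by
      intro x
      have e : (l * u₁ x ^ 2 + (1/l) * 1) / 2 - |u₁ x| = (l * |u₁ x| - 1)^2/(2*l) := by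
        field_simp
        ring_nf
        rw [sq_abs]
      have : (0:ℝ) ≤ (l * |u₁ x| - 1)^2/(2*l) := by positivity
      linarith
    calc |∫ t in α..β, u₁ t| ≤ ∫ t in α..β, |u₁ t| := abs_integral_le_integral_abs hab
      _ ≤ ∫ t in α..β, (l * u₁ t ^ 2 + (1/l) * 1) / 2 := by
          apply integral_mono_on hab ((hII u₁ hu₁i α β h0 hab h1).abs)
            ((((hII _ hu₁sq α β h0 hab h1).const_mul l).add
              (intervalIntegrable_const)).div_const 2)
          intro x _; exact pointwise x
      _ = (l * (∫ t in α..β, u₁ t ^ 2) + (1/l) * (β - α)) / 2 := by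
          rw [intervalIntegral.integral_div, integral_add ((hII _ hu₁sq α β h0 hab h1).const_mul l)
            intervalIntegrable_const, intervalIntegral.integral_const_mul, intervalIntegral.integral_const]
          simp [smul_eq_mul]; ring
      _ ≤ (l * P + (β - α) / l) / 2 := by
          have h3 := hsub _ (hII _ hu₁sq) (fun t => sq_nonneg _) α β h0 hab h1
          rw [← hPdef] at h3
          have h4 : (1/l) * (β - α) = (β - α) / l := by ring
          rw [h4]
          have := mul_le_mul_of_nonneg_left h3 hl.le
          linarith
  have hincr : ∀ s t : ℝ, 0 ≤ s → s ≤ t → t ≤ 1 → |x₁ t - x₁ s| ^ 2 ≤ P * (t - s) := by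
    intro s t h0 hst h1
    have es := hx₁eq s ⟨h0, by linarith⟩
    have et := hx₁eq t ⟨by linarith, h1⟩
    have e : x₁ t - x₁ s = ∫ u in s..t, u₁ u := by
      rw [es, et, hx₁0]
      have := integral_interval_sub_left (hII u₁ hu₁i 0 t (le_refl _) (by linarith) h1)
        (hII u₁ hu₁i 0 s (le_refl _) h0 (by linarith))
      rw [← this]; ring
    rw [e]; exact habs_incr s t h0 hst h1
  -- M² ≤ P
  have hMP : M ^ 2 ≤ P := by
    have := hincr 0 t₀ (le_refl _) ht₀.1 ht₀.2
    rw [hx₁0, sub_zero] at this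
    calc M ^ 2 = |x₁ t₀| ^ 2 := rfl
      _ ≤ P * (t₀ - 0) := this
      _ ≤ P := by rw [sub_zero]; exact mul_le_of_le_one_right hP0 ht₀.2
  -- M > 0
  have hMpos : 0 < M := by
    rcases eq_or_lt_of_le hM0 with h | h
    · exfalso
      have hzero : ∀ s ∈ Set.Icc (0:ℝ) 1, x₁ s = 0 := by
        intro s hs
        have := hM s hs
        rw [← h] at this
        exact abs_eq_zero.1 (le_antisymm this (abs_nonneg _))
      have e := hx₂eq 1 ⟨by norm_num, le_refl _⟩
      rw [hx₂1, hx₂0] at e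
      have : (∫ s in (0:ℝ)..1, (x₁ s ^ 2 + u₂ s * x₁ s ^ k)) = 0 := by
        rw [intervalIntegral.integral_congr (g := fun _ => (0:ℝ))]
        · simp
        · intro s hs
          rw [Set.uIcc_of_le (by norm_num)] at hs
          simp [hzero s hs, zero_pow (by omega : k ≠ 0)]
      rw [this] at e
      linarith
    · exact h
  have hPpos : 0 < P := by
    rcases eq_or_lt_of_le hP0 with h | h
    · exfalso; have := pow_pos hMpos 2; rw [← h] at hMP; linarith
    · exact h
  -- window of length w adjacent to t₀ on which |x₁| ≥ M/2
  set w := M^2/(4*P) with hwdef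
  have hwpos : 0 < w := by positivity
  have hw4 : w ≤ 1/4 := by
    rw [hwdef, div_le_iff₀ (by positivity)]
    linarith [hMP]
  have hwin : ∃ c d : ℝ, 0 ≤ c ∧ d ≤ 1 ∧ d - c = w ∧ ∀ s ∈ Set.Icc c d, M/2 ≤ |x₁ s| := by
    have key : ∀ s, 0 ≤ s → s ≤ 1 → |s - t₀| ≤ w → M/2 ≤ |x₁ s| := by
      intro s h0 h1 hnear
      have hsq : |x₁ t₀ - x₁ s| ^ 2 ≤ P * w := by
        rcases le_total s t₀ with hst | hst
        · calc |x₁ t₀ - x₁ s| ^ 2 ≤ P * (t₀ - s) := hincr s t₀ h0 hst ht₀.2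
            _ ≤ P * w := by
              apply mul_le_mul_of_nonneg_left _ hP0
              have := neg_le_abs (s - t₀); linarith
        · rw [abs_sub_comm]
          calc |x₁ s - x₁ t₀| ^ 2 ≤ P * (s - t₀) := hincr t₀ s ht₀.1 hst h1
            _ ≤ P * w := by
              apply mul_le_mul_of_nonneg_left _ hP0
              have := le_abs_self (s - t₀); linarith
      have hPw : P * w = M^2/4 := by rw [hwdef]; field_simp
      rw [hPw] at hsq
      have h2 : |x₁ t₀ - x₁ s| ≤ M/2 := by
        have e : M^2/4 = (M/2)^2 := by ring
        rw [e] at hsq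
        have hsq' : (x₁ t₀ - x₁ s) ^ 2 ≤ (M/2) ^ 2 := by rwa [sq_abs] at hsq
        exact abs_le_of_sq_le_sq hsq' (by positivity)
      have h3 : M - |x₁ s| ≤ |x₁ t₀ - x₁ s| := by
        have := abs_sub_abs_le_abs_sub (x₁ t₀) (x₁ s)
        rw [← hMdef] at this; linarith
      linarith
    rcases le_total t₀ (1/2) with ht | ht
    · exact ⟨t₀, t₀ + w, ht₀.1, by linarith, by ring, fun s hs => key s
        (by linarith [ht₀.1, hs.1]) (by linarith [hs.2])
        (by rw [abs_le]; constructor <;> linarith [hs.1, hs.2])⟩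
    · exact ⟨t₀ - w, t₀, by linarith, ht₀.2, by ring, fun s hs => key s
        (by linarith [hs.1]) (by linarith [ht₀.2, hs.2])
        (by rw [abs_le]; constructor <;> linarith [hs.1, hs.2])⟩
  obtain ⟨c, d, hc0, hd1, hlen, hwinbd⟩ := hwin
  have hcd : c ≤ d := by linarith
  -- lower bound for A
  have hA_lb : M^2/4 * w ≤ A := by
    have h1 : (∫ t in c..d, x₁ t ^ 2) ≤ A := hsub _ hx₁sqII (fun t => sq_nonneg _) c d hc0 hcd hd1
    have ptw : ∀ s ∈ Set.Icc c d, M^2/4 ≤ x₁ s ^ 2 := by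
      intro s hs
      have h5 := hwinbd s hs
      have h6 : (M/2)^2 ≤ |x₁ s|^2 := pow_le_pow_left₀ (by positivity) h5 2
      rw [sq_abs] at h6
      have e : (M/2)^2 = M^2/4 := by ring
      linarith [e ▸ h6]
    have h2 := integral_mono_on hcd intervalIntegrable_const (hx₁sqII c d hc0 hcd hd1) ptw
    rw [intervalIntegral.integral_const, smul_eq_mul, hlen] at h2
    linarith
  have hApos : 0 < A := lt_of_lt_of_le (by positivity) hA_lb
  -- the constraint from x₂
  have hBeq : B = -ε - A := by
    have e := hx₂eq 1 ⟨by norm_num, le_refl _⟩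
    rw [hx₂1, hx₂0, integral_add (hx₁sqII 0 1 (le_refl _) (by norm_num) (le_refl _))
      (hII _ hBi 0 1 (le_refl _) (by norm_num) (le_refl _)), ← hAdef, ← hBdef] at e
    linarith
  -- Cauchy-Schwarz estimate
  have hC3 : (A + ε) ^ 2 ≤ Q * ((M^2)^(k-1) * A) := by
    apply amgm_sq_le (by positivity) hQ0 (by positivity)
    intro l hl
    have ptw : ∀ s ∈ Set.Icc (0:ℝ) 1,
        |u₂ s * x₁ s ^ k| ≤ (l * u₂ s ^ 2 + ((M^2)^(k-1)/l) * x₁ s ^ 2) / 2 := by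
      intro s hs
      have hxM : |x₁ s| ≤ M := hM s hs
      have e1 : |u₂ s * x₁ s ^ k| = |u₂ s| * |x₁ s| ^ k := by rw [abs_mul, abs_pow]
      have e2 : (|x₁ s| ^ k) ^ 2 = (x₁ s ^ 2) ^ k := by
        calc (|x₁ s| ^ k) ^ 2 = (|x₁ s| ^ 2) ^ k := by
              rw [← pow_mul, ← pow_mul, mul_comm]
          _ = (x₁ s ^ 2) ^ k := by rw [sq_abs]
      have hx2 : x₁ s ^ 2 ≤ M ^ 2 := by
        rw [← sq_abs]; exact pow_le_pow_left₀ (abs_nonneg _) hxM 2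
      have e3 : (x₁ s ^ 2) ^ k ≤ (M^2)^(k-1) * x₁ s ^ 2 := by
        calc (x₁ s ^ 2) ^ k = (x₁ s ^ 2) ^ (k-1) * x₁ s ^ 2 := by
              rw [← pow_succ]; congr 1; omega
          _ ≤ (M^2)^(k-1) * x₁ s ^ 2 :=
              mul_le_mul_of_nonneg_right (pow_le_pow_left₀ (sq_nonneg _) hx2 _) (sq_nonneg _)
      have amgm : 2 * (|u₂ s| * |x₁ s| ^ k) ≤ l * u₂ s ^ 2 + (|x₁ s| ^ k) ^ 2 / l := by
        have e : l * u₂ s ^ 2 + (|x₁ s| ^ k) ^ 2 / l - 2 * (|u₂ s| * |x₁ s| ^ k)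
            = (l * |u₂ s| - |x₁ s| ^ k)^2/l := by
          field_simp
          ring_nf
          rw [sq_abs]
        have : (0:ℝ) ≤ (l * |u₂ s| - |x₁ s| ^ k)^2/l := by positivity
        linarith
      have hdiv : (|x₁ s| ^ k) ^ 2 / l ≤ ((M^2)^(k-1)/l) * x₁ s ^ 2 := by
        rw [e2, div_mul_eq_mul_div]
        gcongr
      rw [e1]; linarith
    calc A + ε = |B| := by
          rw [hBeq, abs_of_nonpos (by linarith)]; ring
      _ ≤ ∫ t in (0:ℝ)..1, |u₂ t * x₁ t ^ k| := by
          rw [hBdef]; exact abs_integral_le_integral_abs (by norm_num)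
      _ ≤ ∫ t in (0:ℝ)..1, (l * u₂ t ^ 2 + ((M^2)^(k-1)/l) * x₁ t ^ 2) / 2 := by
          apply integral_mono_on (by norm_num)
            (hII _ hBi 0 1 (le_refl _) (by norm_num) (le_refl _)).abs
            ((((hII _ hu₂sq 0 1 (le_refl _) (by norm_num) (le_refl _)).const_mul l).add
              ((hx₁sqII 0 1 (le_refl _) (by norm_num) (le_refl _)).const_mul _)).div_const 2) ptw
      _ = (l * Q + ((M^2)^(k-1) * A) / l) / 2 := by
          rw [intervalIntegral.integral_div,
            integral_add ((hII _ hu₂sq 0 1 (le_refl _) (by norm_num) (le_refl _)).const_mul l)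
              ((hx₁sqII 0 1 (le_refl _) (by norm_num) (le_refl _)).const_mul _),
            intervalIntegral.integral_const_mul, intervalIntegral.integral_const_mul, ← hQdef, ← hAdef]
          ring
  -- eliminate A
  have hA_le : A ≤ Q * (M^2)^(k-1) := by
    have h0 : A ^ 2 ≤ (A + ε) ^ 2 := pow_le_pow_left₀ hA0 (by linarith) 2
    have h1 : A * A ≤ (Q * (M^2)^(k-1)) * A := by
      calc A * A = A ^ 2 := (sq A).symm
        _ ≤ Q * ((M^2)^(k-1) * A) := h0.trans hC3
        _ = (Q * (M^2)^(k-1)) * A := by ring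
    exact le_of_mul_le_mul_right h1 hApos
  -- final numeric chain
  have hchain : M^2 * M^2 ≤ 16 * P * (Q * (M^2)^(k-1)) := by
    have h1 := le_trans hA_lb hA_le
    rw [hwdef] at h1
    have e : M^2/4 * (M^2/(4*P)) = M^2*M^2/(16*P) := by field_simp; ring
    rw [e, div_le_iff₀ (by positivity)] at h1
    exact h1.trans_eq (by ring)
  obtain ⟨E, hEdef⟩ : ∃ E : ℝ, E = P + Q := ⟨_, rfl⟩
  have hE0 : 0 ≤ E := by linarith
  have hmE : M^2 ≤ E := by rw [hEdef]; linarith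
  have hsplit : (M^2)^(k-1) = (M^2)^2 * (M^2)^(k-3) := by rw [← pow_add]; congr 1; omega
  have h16 : (M^2)^2 * 1 ≤ (M^2)^2 * (16*P*Q*(M^2)^(k-3)) := by
    calc (M^2)^2 * 1 = M^2*M^2 := by ring
      _ ≤ 16 * P * (Q * (M^2)^(k-1)) := hchain
      _ = (M^2)^2 * (16*P*Q*(M^2)^(k-3)) := by rw [hsplit]; ring
  have hone : (1:ℝ) ≤ 16*P*Q*(M^2)^(k-3) := le_of_mul_le_mul_left h16 (by positivity)
  have hPQ : P*Q ≤ E^2/4 := by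
    have e : E^2/4 - P*Q = (P-Q)^2/4 := by rw [hEdef]; ring
    linarith [sq_nonneg (P - Q), e]
  have hpw : (M^2)^(k-3) ≤ E^(k-3) := pow_le_pow_left₀ (sq_nonneg _) hmE _
  have hfin : 1 ≤ 4 * E^(k-1) := by
    have e1 : E^(k-1) = E^2 * E^(k-3) := by rw [← pow_add]; congr 1; omega
    calc (1:ℝ) ≤ 16*P*Q*(M^2)^(k-3) := hone
      _ ≤ 16*P*Q*E^(k-3) :=
          mul_le_mul_of_nonneg_left hpw (mul_nonneg (mul_nonneg (by norm_num) hP0) hQ0)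
      _ ≤ 16*(E^2/4)*E^(k-3) :=
          mul_le_mul_of_nonneg_right (by linarith) (pow_nonneg hE0 _)
      _ = 4 * E^(k-1) := by rw [e1]; ring
  have hEhalf : 1/2 ≤ E := by
    by_contra hE
    push_neg at hE
    have h1 : E^(k-1) ≤ E^2 := pow_le_pow_of_le_one hE0 (by linarith) (by omega)
    have h2 : E^2 < (1/2)^2 := by
      apply pow_lt_pow_left₀ hE hE0 (by norm_num)
    norm_num at h2
    linarith
  rw [hr, integral_add (hII _ hu₁sq 0 1 (le_refl _) (by norm_num) (le_refl _))
    (hII _ hu₂sq 0 1 (le_refl _) (by norm_num) (le_refl _)), ← hPdef, ← hQdef]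
  linarith

lemma zero_mem_planarCostSet (k : ℕ) : (0:ℝ) ∈ planarCostSet k 1 (0,0) (0,0) := by
  refine ⟨fun _ => 0, fun _ => 0, fun _ => 0, fun _ => 0, measurable_const, measurable_const,
    ⟨0, Filter.Eventually.of_forall fun t _ => by norm_num⟩,
    continuousOn_const, continuousOn_const, rfl, rfl, rfl, rfl, ?_, ?_, ?_⟩ <;> simp

lemma nonempty_planarCostSet (k : ℕ) (ε : ℝ) (hε : 0 < ε) :
    (planarCostSet k 1 (0,0) (0,-ε)).Nonempty := by
  have hcont : Continuous fun s : ℝ => (s - s^2)^k := by fun_prop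
  have hcont2 : Continuous fun s : ℝ => (s - s^2)^2 := by fun_prop
  set I := ∫ s in (0:ℝ)..1, (s - s^2)^k with hIdef
  have hIpos : 0 < I := by
    apply intervalIntegral_pos_of_pos_on (hcont.intervalIntegrable 0 1) _ one_pos
    intro x hx
    have : 0 < x - x^2 := by nlinarith [hx.1, hx.2]
    positivity
  set Av := ∫ s in (0:ℝ)..1, (s - s^2)^2 with hAvdef
  set c := -(ε + Av)/I with hcdef
  have hcontf : Continuous fun s : ℝ => ((s - s^2)^2 + c * (s - s^2)^k) := by fun_prop
  refine ⟨(1/2) * ∫ t in (0:ℝ)..1, ((1 - 2*t)^2 + c^2),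
    fun t => 1 - 2*t, fun _ => c, fun t => t - t^2,
    fun t => ∫ s in (0:ℝ)..t, ((s - s^2)^2 + c * (s - s^2)^k),
    (by fun_prop), measurable_const,
    ⟨1 + |c|, Filter.Eventually.of_forall fun t ht => ⟨?_, ?_⟩⟩,
    (by fun_prop), (continuous_primitive (fun a b => hcontf.intervalIntegrable a b) 0).continuousOn,
    by norm_num, by simp, by norm_num, ?_, ?_, ?_, rfl⟩
  · have h1 : |1 - 2*t| ≤ 1 := by
      rw [abs_le]; constructor <;> nlinarith [ht.1, ht.2]
    have := abs_nonneg c; linarith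
  · have := abs_nonneg c; linarith [le_abs_self c]
  · -- x₂ 1 = -ε
    show (∫ s in (0:ℝ)..1, ((s - s^2)^2 + c * (s - s^2)^k)) = -ε
    rw [integral_add (hcont2.intervalIntegrable 0 1) ((hcont.intervalIntegrable 0 1).const_mul c),
      intervalIntegral.integral_const_mul, ← hAvdef, ← hIdef, hcdef, div_mul_cancel₀ _ hIpos.ne']
    ring
  · -- x₁ identity
    intro t ht
    have h2 : IntervalIntegrable (fun s : ℝ => 2*s) volume 0 t :=
      (continuous_const.mul continuous_id).intervalIntegrable 0 t
    rw [show (fun s : ℝ => 1 - 2*s) = fun s : ℝ => (1 : ℝ) - 2*s from rfl]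
    rw [integral_sub (intervalIntegrable_const) h2, intervalIntegral.integral_const]
    have : (∫ s in (0:ℝ)..t, 2*s) = t^2 := by
      rw [intervalIntegral.integral_const_mul, integral_id]; ring
    rw [this]; simp
  · -- x₂ identity
    intro t ht
    simp

/-- **Discontinuity of the cost** (Proposition in Section 2): for every integer `k ≥ 3`,
the cost function `(x,y) ↦ c₁(x,y)` of the planar control system is not continuous on
`ℝ² × ℝ²`. -/
theorem planarCost_not_continuous (k : ℕ) (hk : 3 ≤ k) :
    ¬ Continuous (fun p : (ℝ × ℝ) × (ℝ × ℝ) => planarCost k 1 p.1 p.2) := by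
  intro hcont
  have hnonneg : ∀ r ∈ planarCostSet k 1 ((0:ℝ),(0:ℝ)) ((0:ℝ),(0:ℝ)), 0 ≤ r := by
    rintro r ⟨u₁, u₂, x₁, x₂, -, -, -, -, -, -, -, -, -, -, -, hr⟩
    rw [hr]
    have : (0:ℝ) ≤ ∫ t in (0:ℝ)..1, (u₁ t ^ 2 + u₂ t ^ 2) :=
      intervalIntegral.integral_nonneg (by norm_num) (fun t _ => by positivity)
    linarith
  have h00 : planarCost k 1 (0,0) (0,0) = 0 := by
    apply le_antisymm
    · exact csInf_le ⟨0, hnonneg⟩ (zero_mem_planarCostSet k)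
    · exact le_csInf ⟨0, zero_mem_planarCostSet k⟩ hnonneg
  have hlb : ∀ ε : ℝ, 0 < ε → (1:ℝ)/4 ≤ planarCost k 1 (0,0) (0,-ε) := fun ε hε =>
    le_csInf (nonempty_planarCostSet k ε hε) (planarCost_lower_bound k hk ε hε)
  have hc : ContinuousAt (fun p : (ℝ × ℝ) × (ℝ × ℝ) => planarCost k 1 p.1 p.2)
      ((0,0),(0,0)) := hcont.continuousAt
  rw [Metric.continuousAt_iff] at hc
  obtain ⟨δ, hδ, hball⟩ := hc (1/8) (by norm_num)
  have hdist : dist (((0,0),(0,-(δ/2))) : (ℝ × ℝ) × (ℝ × ℝ)) ((0,0),(0,0)) < δ := by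
    rw [Prod.dist_eq, Prod.dist_eq, Prod.dist_eq]
    simp [Real.dist_eq, abs_of_nonneg hδ.le]
    linarith
  have h1 := hball hdist
  simp only [h00] at h1
  rw [Real.dist_eq, sub_zero] at h1
  have h2 := hlb (δ/2) (by linarith)
  have h3 := le_abs_self (planarCost k 1 (0,0) (0,-(δ/2)))
  linarith
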